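/- In the fair division problem with discrete goods and single minded agents, a CAEI solution exists if and only if for every item j, the number of agents whose demand set is the singleton {j} is at most Q_j. -/

import Mathlib

open Finset

/-- 0/1 single minded value of a discrete bundle `y` for demand set `D`. -/
noncomputable def discreteValue {m : ℕ} (D : Finset (Fin m)) (y : Fin m → ℕ) : ℝ :=
  if ∀ j ∈ D, 1 ≤ y j then 1 else 0

/-- CAEI for discrete goods. -/
def IsDiscreteCAEI {n m : ℕ} (Q : Fin m → ℕ) (D : Fin n → Finset (Fin m))
    (p : Fin m → ℝ) (x : Fin n → Fin m → ℕ) : Prop :=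
  (∀ j, 0 ≤ p j) ∧
  (∀ j, ∑ i, x i j = Q j) ∧
  (∀ i, ∑ j, p j * (x i j : ℝ) ≤ 1) ∧
  (∀ i (y : Fin m → ℕ), ∑ j, p j * (y j : ℝ) ≤ 1 →
    discreteValue (D i) y ≤ discreteValue (D i) (x i))

open scoped Classical


section Aux
variable {n m : ℕ} (Q : Fin m → ℕ) (D : Fin n → Finset (Fin m))

noncomputable def singCount (j : Fin m) : ℕ := (univ.filter fun i => D i = {j}).card

noncomputable def demCount (E : Finset (Fin m)) (j : Fin m) : ℕ :=
  (univ.filter fun i => j ∈ D i ∧ Disjoint (D i) E).card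

noncomputable def buildE (E : Finset (Fin m)) : Finset (Fin m) :=
  if h : ∃ j, j ∉ E ∧ Q j < demCount D E j then
    buildE (insert (Classical.choose h) E)
  else E
termination_by (univ \ E).card
decreasing_by
  have hj := (Classical.choose_spec h).1
  calc (univ \ insert (Classical.choose h) E).card
      ≤ ((univ \ E).erase (Classical.choose h)).card := by
        apply card_le_card; intro x hx
        simp only [mem_sdiff, mem_erase, mem_insert, mem_univ, true_and] at *
        tauto
    _ < (univ \ E).card := card_erase_lt_of_mem (mem_sdiff.2 ⟨mem_univ _, hj⟩)

lemma subset_buildE : ∀ E : Finset (Fin m), E ⊆ buildE Q D E := by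
  intro E
  induction E using buildE.induct Q D with
  | case1 E h ih =>
    rw [buildE, dif_pos h]
    exact (subset_insert _ _).trans ih
  | case2 E h => rw [buildE, dif_neg h]

lemma buildE_stop : ∀ E : Finset (Fin m), ∀ j ∉ buildE Q D E,
    demCount D (buildE Q D E) j ≤ Q j := by
  intro E
  induction E using buildE.induct Q D with
  | case1 E h ih =>
    rw [buildE, dif_pos h]; exact ih
  | case2 E h =>
    rw [buildE, dif_neg h]
    push_neg at h
    intro j hj
    exact h j hj

lemma buildE_count : ∀ E : Finset (Fin m),
    ∑ j ∈ buildE Q D E \ E, (Q j + 1) ≤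
      (∑ j ∈ buildE Q D E \ E, singCount D j) +
      (univ.filter fun i => ¬ Disjoint (D i) (buildE Q D E) ∧ Disjoint (D i) E ∧
        ¬ ∃ j, D i = {j}).card := by
  intro E
  induction E using buildE.induct Q D with
  | case2 E h =>
    rw [buildE, dif_neg h]
    simp
  | case1 E h ih =>
    rw [buildE, dif_pos h]
    set c := Classical.choose h with hc
    obtain ⟨hcE, hclt⟩ := Classical.choose_spec h
    set B := buildE Q D (insert c E) with hB
    have hcB : c ∈ B := subset_buildE Q D (insert c E) (mem_insert_self _ _)
    have hsd : B \ E = insert c (B \ insert c E) := by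
      ext j
      simp only [mem_sdiff, mem_insert]
      constructor
      · rintro ⟨hjB, hjE⟩
        by_cases hjc : j = c
        · exact Or.inl hjc
        · exact Or.inr ⟨hjB, by simp [mem_insert, hjc, hjE]⟩
      · rintro (rfl | ⟨hjB, hj⟩)
        · exact ⟨hcB, hcE⟩
        · exact ⟨hjB, fun hcon => hj (Or.inr hcon)⟩
    have hcnot : c ∉ B \ insert c E := by simp
    -- witness counting
    set Wm := univ.filter (fun i => c ∈ D i ∧ Disjoint (D i) E ∧ ¬ ∃ j, D i = {j})
      with hWm
    have hW : Q c + 1 ≤ singCount D c + Wm.card := by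
      have h1 : Q c + 1 ≤ demCount D E c := hclt
      have h2 : demCount D E c ≤ singCount D c + Wm.card := by
        rw [singCount, demCount]
        refine le_trans (card_le_card ?_) (card_union_le _ _)
        intro i hi
        simp only [mem_filter, mem_univ, true_and] at hi ⊢
        rw [mem_union]
        by_cases hx : ∃ j, D i = {j}
        · obtain ⟨j, hj⟩ := hx
          have : j = c := by
            have := hi.1; rw [hj, mem_singleton] at this; exact this.symm
          left; simp only [mem_filter, mem_univ, true_and]; rw [hj, this]
        · right; simp only [hWm, mem_filter, mem_univ, true_and]; exact ⟨hi.1, hi.2, hx⟩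
      omega
    set U := univ.filter (fun i => ¬ Disjoint (D i) B ∧ Disjoint (D i) E ∧
        ¬ ∃ j, D i = {j}) with hU
    set U' := univ.filter (fun i => ¬ Disjoint (D i) B ∧ Disjoint (D i) (insert c E) ∧
        ¬ ∃ j, D i = {j}) with hU'
    have hUsub : U' ∪ Wm ⊆ U := by
      intro i hi
      rw [mem_union] at hi
      simp only [hU, hU', hWm, mem_filter, mem_univ, true_and] at hi ⊢
      rcases hi with hi | hi
      · exact ⟨hi.1, (hi.2.1.mono_right (subset_insert _ _)), hi.2.2⟩
      · refine ⟨fun hd => ?_, hi.2.1, hi.2.2⟩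
        exact disjoint_left.1 hd hi.1 hcB
    have hUdisj : Disjoint U' Wm := by
      rw [disjoint_left]
      intro i hi hi'
      simp only [hU', hWm, mem_filter, mem_univ, true_and] at hi hi'
      exact disjoint_left.1 hi.2.1 hi'.1 (mem_insert_self c E)
    have hUcard : U'.card + Wm.card ≤ U.card := by
      rw [← card_union_of_disjoint hUdisj]
      exact card_le_card hUsub
    rw [hsd, sum_insert hcnot, sum_insert hcnot]
    omega
end Aux

lemma discreteValue_le_one {m : ℕ} (D : Finset (Fin m)) (y : Fin m → ℕ) :
    discreteValue D y ≤ 1 := by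
  rw [discreteValue]; split <;> norm_num

lemma discreteValue_nonneg {m : ℕ} (D : Finset (Fin m)) (y : Fin m → ℕ) :
    0 ≤ discreteValue D y := by
  rw [discreteValue]; split <;> norm_num

lemma forward_dir {n m : ℕ} (Q : Fin m → ℕ) (D : Fin n → Finset (Fin m))
    (hQ : ∀ j, 1 ≤ Q j) (p : Fin m → ℝ) (x : Fin n → Fin m → ℕ)
    (h : IsDiscreteCAEI Q D p x) :
    ∀ j : Fin m, (Finset.univ.filter fun i => D i = {j}).card ≤ Q j := by
  obtain ⟨hp, hsum, hbud, hopt⟩ := h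
  intro j
  -- every price is ≤ 1
  have hp1 : ∀ k, p k ≤ 1 := by
    intro k
    have h1 : 1 ≤ ∑ i, x i k := by rw [hsum k]; exact hQ k
    have h2 : ∃ i, 1 ≤ x i k := by
      by_contra hcon
      push_neg at hcon
      have : ∑ i, x i k = 0 := by
        apply Finset.sum_eq_zero; intro i _; exact Nat.lt_one_iff.mp (hcon i)
      omega
    obtain ⟨i, hi⟩ := h2
    calc p k = p k * 1 := by ring
      _ ≤ p k * (x i k : ℝ) := by
          apply mul_le_mul_of_nonneg_left _ (hp k)
          exact_mod_cast hi
      _ ≤ ∑ k', p k' * (x i k' : ℝ) := by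
          apply Finset.single_le_sum (f := fun k' => p k' * (x i k' : ℝ)) _ (mem_univ k)
          intro k' _
          exact mul_nonneg (hp k') (by positivity)
      _ ≤ 1 := hbud i
  -- singleton agents get their item
  have hkey : ∀ i, D i = {j} → 1 ≤ x i j := by
    intro i hDi
    set y : Fin m → ℕ := fun k => if k = j then 1 else 0 with hy
    have hcost : ∑ k, p k * (y k : ℝ) = p j := by
      rw [Finset.sum_eq_single j]
      · simp [hy]
      · intro k _ hk; simp [hy, hk]
      · intro hj; exact absurd (mem_univ j) hj
    have hvy : discreteValue (D i) y = 1 := by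
      rw [discreteValue, if_pos]
      intro k hk
      rw [hDi, mem_singleton] at hk
      simp [hy, hk]
    have := hopt i y (by rw [hcost]; exact hp1 j)
    rw [hvy] at this
    rw [discreteValue] at this
    by_cases hc : ∀ k ∈ D i, 1 ≤ x i k
    · exact hc j (by rw [hDi]; exact mem_singleton_self j)
    · rw [if_neg hc] at this; norm_num at this
  calc (Finset.univ.filter fun i => D i = {j}).card
      = ∑ i ∈ Finset.univ.filter (fun i => D i = {j}), 1 := by simp
    _ ≤ ∑ i ∈ Finset.univ.filter (fun i => D i = {j}), x i j := by
        apply Finset.sum_le_sum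
        intro i hi
        exact hkey i (mem_filter.1 hi).2
    _ ≤ ∑ i, x i j := Finset.sum_le_sum_of_subset (filter_subset _ _)
    _ = Q j := hsum j

lemma backward_dir {n m : ℕ} (Q : Fin m → ℕ) (D : Fin n → Finset (Fin m))
    (hQ : ∀ j, 1 ≤ Q j)
    (hdem : ∀ j : Fin m, ∃ i, j ∈ D i)
    (hsing : ∀ j : Fin m, (Finset.univ.filter fun i => D i = {j}).card ≤ Q j) :
    ∃ (p : Fin m → ℝ) (x : Fin n → Fin m → ℕ), IsDiscreteCAEI Q D p x := by
  rcases Nat.eq_zero_or_pos m with hm | hm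
  · -- trivial case m = 0
    subst hm
    refine ⟨fun j => 0, fun i j => 0, ?_, ?_, ?_, ?_⟩
    · intro j; exact le_refl 0
    · intro j; exact absurd j.isLt (by omega)
    · intro i; simp
    · intro i y hy
      have h1 : discreteValue (D i) y = 1 := by
        rw [discreteValue, if_pos]; intro j hj; exact absurd j.isLt (by omega)
      have h2 : discreteValue (D i) (fun _ => 0) = 1 := by
        rw [discreteValue, if_pos]; intro j hj; exact absurd j.isLt (by omega)
      rw [h1, h2]
  -- main case
  obtain ⟨i0, _⟩ := hdem ⟨0, hm⟩
  have hn : 0 < n := i0.pos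
  set E := buildE Q D ∅ with hE
  have hE1 : ∀ j ∉ E, demCount D E j ≤ Q j := buildE_stop Q D ∅
  set U : Finset (Fin n) := univ.filter (fun i => ¬ Disjoint (D i) E ∧
      Disjoint (D i) (∅ : Finset (Fin m)) ∧ ¬ ∃ j, D i = {j}) with hU
  have hE2 : ∑ j ∈ E, (Q j + 1) ≤ (∑ j ∈ E, singCount D j) + U.card := by
    have := buildE_count Q D ∅
    rwa [sdiff_empty] at this
  set K := ∑ j, Q j with hK
  set δ : ℝ := 1 / (K + m + 1) with hδ
  have hδpos : 0 < δ := by positivity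
  have hδ1 : δ ≤ 1 := by
    rw [hδ, div_le_one (by positivity)]
    have : (0:ℝ) ≤ (K : ℝ) + m := by positivity
    linarith
  set p : Fin m → ℝ := fun j => if j ∈ E then (1:ℝ) else δ with hp
  have hp0 : ∀ j, 0 ≤ p j := by
    intro j; rw [hp]; dsimp only; split
    · norm_num
    · exact le_of_lt hδpos
  have hp1 : ∀ j, p j ≤ 1 := by
    intro j; rw [hp]; dsimp only; split
    · norm_num
    · exact hδ1
  have hpδ : ∀ j, δ ≤ p j := by
    intro j; rw [hp]; dsimp only; split
    · exact hδ1
    · exact le_refl _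
  set C : Finset (Fin m × ℕ) :=
    E.biUnion (fun j => (Finset.range (Q j - singCount D j)).image (fun k => (j, k)))
    with hC
  have hCfst : ∀ c ∈ C, c.1 ∈ E := by
    intro c hc
    rw [hC, mem_biUnion] at hc
    obtain ⟨j, hj, hc⟩ := hc
    rw [mem_image] at hc
    obtain ⟨k, _, rfl⟩ := hc
    exact hj
  have hCcard : C.card = ∑ j ∈ E, (Q j - singCount D j) := by
    rw [hC, card_biUnion]
    · apply sum_congr rfl
      intro j _
      rw [card_image_of_injective _ (fun a b hab => by simpa using congrArg Prod.snd hab),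
        card_range]
    · intro a ha b hb hab
      rw [Function.onFun, disjoint_left]
      intro c hca hcb
      rw [mem_image] at hca hcb
      obtain ⟨k1, _, rfl⟩ := hca
      obtain ⟨k2, _, h2⟩ := hcb
      have hfst : b = a := by simpa using congrArg Prod.fst h2
      exact hab hfst.symm
  have hCfilter : ∀ j ∈ E, C.filter (fun c => c.1 = j) =
      (Finset.range (Q j - singCount D j)).image (fun k => (j, k)) := by
    intro j hj
    ext c
    simp only [mem_filter, hC, mem_biUnion, mem_image]
    constructor
    · rintro ⟨⟨j', hj', k, hk, rfl⟩, h1⟩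
      dsimp at h1; subst h1
      exact ⟨k, hk, rfl⟩
    · rintro ⟨k, hk, rfl⟩
      exact ⟨⟨j, hj, k, hk, rfl⟩, rfl⟩
  have hLcard : C.card + E.card ≤ U.card := by
    have heq : ∑ j ∈ E, (Q j + 1) =
        (∑ j ∈ E, (Q j - singCount D j)) + ((∑ j ∈ E, singCount D j) + E.card) := by
      calc ∑ j ∈ E, (Q j + 1)
          = ∑ j ∈ E, ((Q j - singCount D j) + (singCount D j + 1)) := by
            apply sum_congr rfl
            intro j _
            have h1 : singCount D j ≤ Q j := hsing j
            omega
        _ = (∑ j ∈ E, (Q j - singCount D j)) + ∑ j ∈ E, (singCount D j + 1) :=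
            sum_add_distrib
        _ = (∑ j ∈ E, (Q j - singCount D j)) + ((∑ j ∈ E, singCount D j) + E.card) := by
            rw [sum_add_distrib, sum_const, smul_eq_mul, mul_one]
    omega
  -- choose the set V of agents receiving leftover expensive copies
  obtain ⟨V, hVU, hVcard⟩ : ∃ V ⊆ U, V.card = C.card :=
    exists_subset_card_eq (by omega)
  have hVprop : ∀ i ∈ V, ¬ Disjoint (D i) E ∧ ¬ ∃ j, D i = {j} := by
    intro i hi
    have := mem_filter.1 (hVU hi)
    exact ⟨this.2.1, this.2.2.2⟩
  set e := Finset.equivOfCardEq hVcard with he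
  set itemOf : Fin n → Option (Fin m) :=
    fun i => if h : i ∈ V then some ((↑(e ⟨i, h⟩) : Fin m × ℕ)).1 else none with hitem
  have hitemV : ∀ i j, itemOf i = some j → i ∈ V := by
    intro i j hij
    by_contra hiv
    rw [hitem] at hij
    simp only [dif_neg hiv] at hij
    exact Option.some_ne_none _ hij.symm
  -- the dump agent
  have histar : ∃ is : Fin n, is ∉ V ∧
      ((¬ Disjoint (D is) E ∧ ¬ ∃ j, D is = {j}) ∨ E = ∅) := by
    rcases E.eq_empty_or_nonempty with hEe | hEne
    · have hC0 : C = ∅ := by rw [hC, hEe]; rfl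
      have hV0 : V = ∅ := card_eq_zero.1 (by rw [hVcard, hC0, card_empty])
      exact ⟨i0, by rw [hV0]; exact notMem_empty _, Or.inr hEe⟩
    · have hE1' : 1 ≤ E.card := card_pos.2 hEne
      have hlt : V.card < U.card := by omega
      have hns : ¬ U ⊆ V := fun hsub => absurd (card_le_card hsub) (by omega)
      obtain ⟨is, his⟩ := sdiff_nonempty.2 hns
      rw [mem_sdiff] at his
      have := mem_filter.1 his.1
      exact ⟨is, his.2, Or.inl ⟨this.2.1, this.2.2.2⟩⟩
  obtain ⟨istar, histarV, histarP⟩ := histar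
  -- the allocation
  set x : Fin n → Fin m → ℕ := fun i j =>
    (if j ∈ D i ∧ (Disjoint (D i) E ∨ D i = {j}) then 1 else 0) +
    (if itemOf i = some j then 1 else 0) +
    (if i = istar ∧ j ∉ E then Q j - demCount D E j else 0) with hx
  have hδmK : δ * m + δ * K ≤ 1 := by
    have h1 : δ * ((m:ℝ) + K) ≤ 1 := by
      rw [hδ, div_mul_eq_mul_div, one_mul, div_le_one (by positivity)]
      linarith
    linarith
  refine ⟨p, x, hp0, ?_, ?_, ?_⟩
  · -- column sums
    intro j
    have hsplit : ∑ i, x i j =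
        (univ.filter (fun i => j ∈ D i ∧ (Disjoint (D i) E ∨ D i = {j}))).card
        + (univ.filter (fun i => itemOf i = some j)).card
        + ∑ i, (if i = istar ∧ j ∉ E then Q j - demCount D E j else 0) := by
      rw [hx, card_filter, card_filter, ← sum_add_distrib, ← sum_add_distrib]
    rw [hsplit]
    by_cases hjE : j ∈ E
    · -- expensive item
      have hA : (univ.filter (fun i => j ∈ D i ∧ (Disjoint (D i) E ∨ D i = {j}))) =
          (univ.filter (fun i => D i = {j})) := by
        apply filter_congr
        intro i _
        constructor
        · rintro ⟨hjD, (hd | hs)⟩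
          · exact absurd hjE (disjoint_left.1 hd hjD)
          · exact hs
        · intro hs
          exact ⟨by rw [hs]; exact mem_singleton_self j, Or.inr hs⟩
      have hBcard : (univ.filter (fun i => itemOf i = some j)).card =
          (C.filter (fun c => c.1 = j)).card := by
        have hv : ∀ a ∈ univ.filter (fun i => itemOf i = some j), a ∈ V :=
          fun a ha => hitemV a j (mem_filter.1 ha).2
        refine card_bij (fun a ha => (↑(e ⟨a, hv a ha⟩) : Fin m × ℕ)) ?_ ?_ ?_
        · intro a ha
          rw [mem_filter]
          refine ⟨(e ⟨a, hv a ha⟩).2, ?_⟩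
          have h2 := (mem_filter.1 ha).2
          rw [hitem] at h2
          simp only [dif_pos (hv a ha)] at h2
          exact Option.some.inj h2
        · intro a1 ha1 a2 ha2 heq
          exact congrArg Subtype.val (e.injective (Subtype.coe_injective heq))
        · intro b hb
          have hbC : b ∈ C := (mem_filter.1 hb).1
          have hsV : (e.symm ⟨b, hbC⟩).1 ∈ V := (e.symm ⟨b, hbC⟩).2
          have key : ∀ (h : (e.symm ⟨b, hbC⟩).1 ∈ V),
              e ⟨(e.symm ⟨b, hbC⟩).1, h⟩ = ⟨b, hbC⟩ := by
            intro h
            rw [show (⟨(e.symm ⟨b, hbC⟩).1, h⟩ : {z // z ∈ V}) = e.symm ⟨b, hbC⟩ from rfl]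
            exact e.apply_symm_apply _
          have hmem : (e.symm ⟨b, hbC⟩).1 ∈ univ.filter (fun i => itemOf i = some j) := by
            rw [mem_filter]
            refine ⟨mem_univ _, ?_⟩
            rw [hitem]
            simp only [dif_pos hsV, key]
            exact congrArg some (mem_filter.1 hb).2
          refine ⟨(e.symm ⟨b, hbC⟩).1, hmem, ?_⟩
          exact congrArg Subtype.val (key _)
      have hBval : (C.filter (fun c => c.1 = j)).card = Q j - singCount D j := by
        rw [hCfilter j hjE,
          card_image_of_injective _ (fun a b hab => by simpa using congrArg Prod.snd hab),
          card_range]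
      have hCz : ∑ i, (if i = istar ∧ j ∉ E then Q j - demCount D E j else 0) = 0 := by
        apply sum_eq_zero
        intro i _
        simp [hjE]
      rw [hA, hBcard, hBval, hCz]
      have := hsing j
      rw [singCount] at *
      omega
    · -- cheap item
      have hA : (univ.filter (fun i => j ∈ D i ∧ (Disjoint (D i) E ∨ D i = {j}))) =
          (univ.filter (fun i => j ∈ D i ∧ Disjoint (D i) E)) := by
        apply filter_congr
        intro i _
        constructor
        · rintro ⟨hjD, (hd | hs)⟩
          · exact ⟨hjD, hd⟩
          · refine ⟨hjD, ?_⟩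
            rw [hs, disjoint_singleton_left]
            exact hjE
        · rintro ⟨hjD, hd⟩
          exact ⟨hjD, Or.inl hd⟩
      have hB : (univ.filter (fun i => itemOf i = some j)) = ∅ := by
        rw [filter_eq_empty_iff]
        intro i _
        intro hcon
        have hiV := hitemV i j hcon
        rw [hitem] at hcon
        simp only [dif_pos hiV] at hcon
        have := hCfst _ (e ⟨i, hiV⟩).2
        rw [Option.some.inj hcon] at this
        exact hjE this
      have hCz : ∑ i, (if i = istar ∧ j ∉ E then Q j - demCount D E j else 0) =
          Q j - demCount D E j := by
        have : ∀ i : Fin n, (if i = istar ∧ j ∉ E then Q j - demCount D E j else 0) =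
            (if i = istar then Q j - demCount D E j else 0) := by
          intro i
          by_cases hii : i = istar <;> simp [hii, hjE]
        rw [sum_congr rfl (fun i _ => this i), sum_ite_eq' univ istar]
        simp
      rw [hA, hB, hCz, card_empty]
      have h1 := hE1 j hjE
      rw [demCount] at *
      omega
  · -- budgets
    intro i
    have hsplit : ∑ j, p j * ((x i j : ℕ) : ℝ) =
        (∑ j, p j * (if j ∈ D i ∧ (Disjoint (D i) E ∨ D i = {j}) then (1:ℝ) else 0))
        + (∑ j, p j * (if itemOf i = some j then (1:ℝ) else 0))
        + (∑ j, p j * (if i = istar ∧ j ∉ E then ((Q j - demCount D E j : ℕ) : ℝ) else 0)) := by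
      rw [← sum_add_distrib, ← sum_add_distrib]
      apply sum_congr rfl
      intro j _
      rw [hx]
      push_cast
      ring
    rw [hsplit]
    -- bound on the dump part
    have hS3 : (∑ j, p j * (if i = istar ∧ j ∉ E then ((Q j - demCount D E j : ℕ) : ℝ) else 0))
        ≤ δ * K := by
      calc (∑ j, p j * (if i = istar ∧ j ∉ E then ((Q j - demCount D E j : ℕ) : ℝ) else 0))
          ≤ ∑ j, δ * (Q j : ℝ) := by
            apply sum_le_sum
            intro j _
            by_cases hc : i = istar ∧ j ∉ E
            · rw [if_pos hc]
              have hpj : p j = δ := by rw [hp]; simp only [if_neg hc.2]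
              rw [hpj]
              apply mul_le_mul_of_nonneg_left _ (le_of_lt hδpos)
              exact_mod_cast Nat.sub_le _ _
            · rw [if_neg hc, mul_zero]
              positivity
        _ = δ * K := by
            rw [← mul_sum, hK]
            push_cast
            ring
    have hS3z : i ≠ istar →
        (∑ j, p j * (if i = istar ∧ j ∉ E then ((Q j - demCount D E j : ℕ) : ℝ) else 0)) = 0 := by
      intro hne
      apply sum_eq_zero
      intro j _
      simp [hne]
    have hS2le : (∑ j, p j * (if itemOf i = some j then (1:ℝ) else 0)) ≤ 1 ∧
        (i ∉ V → (∑ j, p j * (if itemOf i = some j then (1:ℝ) else 0)) = 0) := by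
      constructor
      · by_cases hiV : i ∈ V
        · set j0 := (↑(e ⟨i, hiV⟩) : Fin m × ℕ).1 with hj0
          have hio : itemOf i = some j0 := by rw [hitem]; simp only [dif_pos hiV]; rfl
          rw [Finset.sum_eq_single j0]
          · rw [hio, if_pos rfl, mul_one]
            exact hp1 j0
          · intro j _ hne
            rw [if_neg, mul_zero]
            intro hcon
            rw [hio] at hcon
            exact hne (Option.some.inj hcon).symm
          · intro hcon
            exact absurd (mem_univ j0) hcon
        · have : ∀ j : Fin m, p j * (if itemOf i = some j then (1:ℝ) else 0) = 0 := by
            intro j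
            rw [if_neg, mul_zero]
            intro hcon
            exact hiV (hitemV i j hcon)
          rw [sum_congr rfl (fun j _ => this j), sum_const_zero]
          norm_num
      · intro hiV
        apply sum_eq_zero
        intro j _
        rw [if_neg, mul_zero]
        intro hcon
        exact hiV (hitemV i j hcon)
    by_cases hdisj : Disjoint (D i) E
    · -- satisfied cheap agent
      have hiV : i ∉ V := fun h => (hVprop i h).1 hdisj
      have hS1 : (∑ j, p j * (if j ∈ D i ∧ (Disjoint (D i) E ∨ D i = {j}) then (1:ℝ) else 0))
          ≤ δ * m := by
        calc (∑ j, p j * (if j ∈ D i ∧ (Disjoint (D i) E ∨ D i = {j}) then (1:ℝ) else 0))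
            ≤ ∑ _j : Fin m, δ := by
              apply sum_le_sum
              intro j _
              by_cases hc : j ∈ D i ∧ (Disjoint (D i) E ∨ D i = {j})
              · rw [if_pos hc, mul_one, hp]
                simp only [if_neg (disjoint_left.1 hdisj hc.1)]
                exact le_refl δ
              · rw [if_neg hc, mul_zero]
                exact le_of_lt hδpos
          _ = δ * m := by rw [sum_const, card_univ, Fintype.card_fin, nsmul_eq_mul, mul_comm]
      have h2 := hS2le.2 hiV
      linarith [hS3, hS1, hδmK]
    · by_cases hsgl : ∃ j0, D i = {j0}
      · -- singleton agent of an expensive item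
        obtain ⟨j0, hj0⟩ := hsgl
        have hiV : i ∉ V := fun h => (hVprop i h).2 ⟨j0, hj0⟩
        have hii : i ≠ istar := by
          rintro rfl
          rcases histarP with ⟨_, hml⟩ | hEe
          · exact hml ⟨j0, hj0⟩
          · exact hdisj (by rw [hEe]; exact disjoint_empty_right _)
        have hS1 : (∑ j, p j * (if j ∈ D i ∧ (Disjoint (D i) E ∨ D i = {j}) then (1:ℝ) else 0))
            = p j0 := by
          rw [Finset.sum_eq_single j0]
          · rw [if_pos ⟨by rw [hj0]; exact mem_singleton_self j0, Or.inr hj0⟩, mul_one]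
          · intro j _ hne
            rw [if_neg, mul_zero]
            rintro ⟨hjD, -⟩
            rw [hj0, mem_singleton] at hjD
            exact hne hjD
          · intro hcon
            exact absurd (mem_univ j0) hcon
        rw [hS1, hS2le.2 hiV, hS3z hii]
        have := hp1 j0
        linarith
      · -- unsatisfied multi agent
        have hS1 : (∑ j, p j * (if j ∈ D i ∧ (Disjoint (D i) E ∨ D i = {j}) then (1:ℝ) else 0))
            = 0 := by
          apply sum_eq_zero
          intro j _
          rw [if_neg, mul_zero]
          rintro ⟨hjD, (hd | hs)⟩
          · exact hdisj hd
          · exact hsgl ⟨j, hs⟩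
        rw [hS1]
        by_cases hiV : i ∈ V
        · have hii : i ≠ istar := fun hcon => histarV (hcon ▸ hiV)
          rw [hS3z hii]
          linarith [hS2le.1]
        · rw [hS2le.2 hiV]
          linarith [hS3, hδmK, mul_nonneg (le_of_lt hδpos) (show (0:ℝ) ≤ m by positivity)]
  · -- optimality
    intro i y hy
    by_cases hsat : Disjoint (D i) E ∨ ∃ j0, D i = {j0}
    · have hval : discreteValue (D i) (x i) = 1 := by
        rw [discreteValue, if_pos]
        intro j hj
        have hcond : j ∈ D i ∧ (Disjoint (D i) E ∨ D i = {j}) := by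
          rcases hsat with h | ⟨j0, hj0⟩
          · exact ⟨hj, Or.inl h⟩
          · have hjj : j = j0 := by rwa [hj0, mem_singleton] at hj
            exact ⟨hj, Or.inr (by rw [hj0, hjj])⟩
        rw [hx]
        simp only [if_pos hcond]
        omega
      rw [hval]
      exact discreteValue_le_one _ _
    · push_neg at hsat
      obtain ⟨hnd, hns⟩ := hsat
      have hy0 : ¬ ∀ j ∈ D i, 1 ≤ y j := by
        intro hall
        obtain ⟨j1, hj1D, hj1E⟩ := not_disjoint_iff.1 hnd
        have hj2 : ∃ j2 ∈ D i, j2 ≠ j1 := by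
          by_contra hcon
          push_neg at hcon
          exact hns j1 (eq_singleton_iff_unique_mem.2 ⟨hj1D, fun z hz => hcon z hz⟩)
        obtain ⟨j2, hj2D, hj2ne⟩ := hj2
        have hterm : ∀ j : Fin m, 0 ≤ p j * (y j : ℝ) :=
          fun j => mul_nonneg (hp0 j) (by positivity)
        have hsum2 : p j1 * (y j1 : ℝ) + p j2 * (y j2 : ℝ) ≤ ∑ j, p j * (y j : ℝ) := by
          have h := Finset.sum_le_sum_of_subset_of_nonneg
            (show ({j1, j2} : Finset (Fin m)) ⊆ univ from subset_univ _)
            (fun j _ _ => hterm j)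
          rwa [Finset.sum_pair (Ne.symm hj2ne)] at h
        have hpj1 : p j1 = 1 := by rw [hp]; simp only [if_pos hj1E]
        have hy1 : (1:ℝ) ≤ (y j1 : ℝ) := by exact_mod_cast hall j1 hj1D
        have hy2 : (1:ℝ) ≤ (y j2 : ℝ) := by exact_mod_cast hall j2 hj2D
        have h1 : (1:ℝ) ≤ p j1 * (y j1 : ℝ) := by rw [hpj1]; linarith
        have h2 : δ ≤ p j2 * (y j2 : ℝ) := by
          calc δ ≤ p j2 := hpδ j2
            _ = p j2 * 1 := by ring
            _ ≤ p j2 * (y j2 : ℝ) := mul_le_mul_of_nonneg_left hy2 (hp0 j2)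
        linarith [hy]
      rw [discreteValue, if_neg hy0]
      exact discreteValue_nonneg _ _

/-- Characterization: a CAEI exists iff no item is over-demanded among
singleton-demand agents. -/
theorem caei_exists_iff_no_singleton_overdemand (n m : ℕ) (Q : Fin m → ℕ)
    (D : Fin n → Finset (Fin m))
    (hQ : ∀ j, 1 ≤ Q j)
    (hdem : ∀ j : Fin m, ∃ i, j ∈ D i)
    (hD : ∀ i, (D i).Nonempty) :
    (∃ (p : Fin m → ℝ) (x : Fin n → Fin m → ℕ), IsDiscreteCAEI Q D p x) ↔
      ∀ j : Fin m, (Finset.univ.filter fun i => D i = {j}).card ≤ Q j := by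
  constructor
  · rintro ⟨p, x, h⟩
    exact forward_dir Q D hQ p x h
  · intro hsing
    exact backward_dir Q D hQ hdem hsing
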